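/- Let f : ℂ → ℂ be continuously differentiable (in the real sense) and bounded, and suppose (ð₂f)(z) = 0 for every z ∈ ℂ, i.e. z ↦ (1+|z|²)²f(z) is holomorphic on ℂ. Then there exists a polynomial q over ℂ of degree at most 4 such that f(z) = q(z)/(1+|z|²)² for all z ∈ ℂ. (Hence the five functions Y_k(z) = z^k(1+|z|²)^(−2), k = 0,…,4, representing the harmonics ₂Y_{2,m}, span the ð-kernel among regular spin-weight-2 functions on the sphere.) -/

import Mathlib

open Complex

/-- The Wirtinger derivative `∂_z f = (1/2)(∂ₓf − i∂_yf)` of `f : ℂ → ℂ`,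
viewed as a real-differentiable function on `ℝ²`. -/
noncomputable def wirtD (f : ℂ → ℂ) (z : ℂ) : ℂ :=
  (1 / 2 : ℂ) * (fderiv ℝ f z 1 - Complex.I * fderiv ℝ f z Complex.I)

/-- The conjugate Wirtinger derivative `∂_z̄ f = (1/2)(∂ₓf + i∂_yf)`. -/
noncomputable def wirtDBar (f : ℂ → ℂ) (z : ℂ) : ℂ :=
  (1 / 2 : ℂ) * (fderiv ℝ f z 1 + Complex.I * fderiv ℝ f z Complex.I)

/-- The spin-weight-`s` Newman–Penrose operator
`(ð_s f)(z) = 2^(−1/2) (1+|z|²)^(1−s) ∂_z̄[(1+|z|²)^s f](z)`. -/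
noncomputable def edth (s : ℤ) (f : ℂ → ℂ) (z : ℂ) : ℂ :=
  (Real.sqrt 2 : ℂ)⁻¹ * (1 + (‖z‖) ^ 2 : ℂ) ^ (1 - s) *
    wirtDBar (fun w => (1 + (‖w‖) ^ 2 : ℂ) ^ s * f w) z

/-- The spin-weight-`s` Newman–Penrose operator
`(ð̄_s f)(z) = 2^(−1/2) (1+|z|²)^(1+s) ∂_z[(1+|z|²)^(−s) f](z)`. -/
noncomputable def edthBar (s : ℤ) (f : ℂ → ℂ) (z : ℂ) : ℂ :=
  (Real.sqrt 2 : ℂ)⁻¹ * (1 + (‖z‖) ^ 2 : ℂ) ^ (1 + s) *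
    wirtD (fun w => (1 + (‖w‖) ^ 2 : ℂ) ^ (-s) * f w) z

/-- The representative `Y_k(z) = z^k (1+|z|²)^(−2)` of the spin-weight-2,
`l = 2` spherical harmonic `₂Y_{2,k−2}` in the stereographic chart. -/
noncomputable def Ysph (k : ℕ) (z : ℂ) : ℂ :=
  z ^ k / (1 + (‖z‖) ^ 2 : ℂ) ^ 2

/-- Cauchy–Riemann: real-differentiable with `∂_z̄ = 0` condition implies ℂ-differentiable. -/
lemma cr_diffAt {g : ℂ → ℂ} {z : ℂ} (hg : DifferentiableAt ℝ g z)
    (h : fderiv ℝ g z Complex.I = Complex.I * fderiv ℝ g z 1) :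
    DifferentiableAt ℂ g z := by
  rw [differentiableAt_iff_restrictScalars ℝ hg]
  refine ⟨(fderiv ℝ g z 1) • (1 : ℂ →L[ℂ] ℂ), ?_⟩
  have key : ∀ w : ℂ, fderiv ℝ g z w = w * fderiv ℝ g z 1 := by
    intro w
    have hw : w = (w.re : ℝ) • (1 : ℂ) + (w.im : ℝ) • Complex.I := by
      rw [Complex.real_smul, Complex.real_smul, mul_one]
      exact (Complex.re_add_im w).symm
    calc fderiv ℝ g z w = fderiv ℝ g z ((w.re : ℝ) • (1 : ℂ) + (w.im : ℝ) • Complex.I) := by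
          rw [← hw]
      _ = (w.re : ℝ) • fderiv ℝ g z 1 + (w.im : ℝ) • fderiv ℝ g z Complex.I := by
          rw [map_add, map_smul, map_smul]
      _ = (w.re : ℂ) * fderiv ℝ g z 1 + (w.im : ℂ) * (Complex.I * fderiv ℝ g z 1) := by
          rw [h, Complex.real_smul, Complex.real_smul]
      _ = ((w.re : ℂ) + (w.im : ℂ) * Complex.I) * fderiv ℝ g z 1 := by ring
      _ = w * fderiv ℝ g z 1 := by rw [Complex.re_add_im]
  ext w
  simp [key w, mul_comm]

set_option maxHeartbeats 1000000 in
set_option maxRecDepth 4000 in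
/-- An entire function with quartic growth is a polynomial of degree ≤ 4. -/
lemma entire_quartic_growth (g : ℂ → ℂ) (hg : Differentiable ℂ g) (C : ℝ)
    (hC : ∀ z : ℂ, ‖g z‖ ≤ C * (1 + ‖z‖) ^ 4) :
    ∃ q : Polynomial ℂ, q.degree ≤ 4 ∧ ∀ z : ℂ, g z = q.eval z := by
  have hC0 : 0 ≤ C := by
    have h := hC 0
    rw [norm_zero, add_zero, one_pow, mul_one] at h
    exact le_trans (norm_nonneg _) h
  set p := cauchyPowerSeries g 0 ((1:NNReal):ℝ) with hp_def
  have hp : HasFPowerSeriesOnBall g p 0 ⊤ := hg.hasFPowerSeriesOnBall 0 one_pos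
  have hcoeff : ∀ n : ℕ, 5 ≤ n → p.coeff n = 0 := by
    intro n hn
    have key : ∀ R : ℝ, 1 ≤ R → ‖p.coeff n‖ ≤ 16 * C / R := by
      intro R hR
      have hR0 : (0 : ℝ) < R := lt_of_lt_of_le one_pos hR
      have hpR : HasFPowerSeriesOnBall g (cauchyPowerSeries g 0 R) 0 ⊤ := by
        have := hg.hasFPowerSeriesOnBall 0 (R := R.toNNReal) (by simpa using hR0)
        simpa [Real.coe_toNNReal R hR0.le] using this
      have hpeq : cauchyPowerSeries g 0 R = p :=
        hpR.hasFPowerSeriesAt.eq_formalMultilinearSeries hp.hasFPowerSeriesAt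
      have h1 : ‖p.coeff n‖ ≤ ‖p n‖ := by
        have h := (p n).le_opNorm (fun _ => (1 : ℂ))
        simp only [norm_one, Finset.prod_const, one_pow, mul_one] at h
        exact h
      have h2 : ‖p n‖ ≤ ((2 * Real.pi)⁻¹ *
          ∫ θ : ℝ in (0)..2 * Real.pi, ‖g (circleMap 0 R θ)‖) * |R|⁻¹ ^ n := by
        rw [← hpeq]
        exact norm_cauchyPowerSeries_le g 0 R n
      have hint : (∫ θ : ℝ in (0)..2 * Real.pi, ‖g (circleMap 0 R θ)‖)
          ≤ (C * (1 + R) ^ 4) * (2 * Real.pi) := by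
        have hb : ∀ θ ∈ Set.uIoc (0 : ℝ) (2 * Real.pi),
            ‖‖g (circleMap 0 R θ)‖‖ ≤ C * (1 + R) ^ 4 := by
          intro θ _
          rw [norm_norm]
          have := hC (circleMap 0 R θ)
          rw [show ‖circleMap 0 R θ‖ = R by
            rw [norm_circleMap_zero, abs_of_pos hR0]] at this
          exact this
        have := intervalIntegral.norm_integral_le_of_norm_le_const hb
        rw [sub_zero, abs_of_pos Real.two_pi_pos] at this
        exact le_trans (le_abs_self _) this
      have hRinv : |R|⁻¹ ^ n ≤ (R ^ 5)⁻¹ := by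
        rw [abs_of_pos hR0, inv_pow]
        apply inv_anti₀ (by positivity)
        exact pow_le_pow_right₀ hR hn
      have hstep : ‖p.coeff n‖ ≤ (C * (1 + R) ^ 4) * (R ^ 5)⁻¹ := by
        refine le_trans h1 (le_trans h2 ?_)
        have hA : (2 * Real.pi)⁻¹ * (∫ θ : ℝ in (0)..2 * Real.pi, ‖g (circleMap 0 R θ)‖)
            ≤ C * (1 + R) ^ 4 := by
          rw [inv_mul_le_iff₀ Real.two_pi_pos]
          calc (∫ θ : ℝ in (0)..2 * Real.pi, ‖g (circleMap 0 R θ)‖)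
              ≤ (C * (1 + R) ^ 4) * (2 * Real.pi) := hint
            _ = 2 * Real.pi * (C * (1 + R) ^ 4) := by ring
        exact mul_le_mul hA hRinv (by positivity) (by positivity)
      refine le_trans hstep ?_
      rw [div_eq_mul_inv]
      have h14 : (1 + R) ^ 4 ≤ 16 * R ^ 4 := by
        have : (1 + R) ≤ 2 * R := by linarith
        calc (1 + R) ^ 4 ≤ (2 * R) ^ 4 := by
              apply pow_le_pow_left₀ (by linarith) this
          _ = 16 * R ^ 4 := by ring
      have : C * (1 + R) ^ 4 * (R ^ 5)⁻¹ ≤ C * (16 * R ^ 4) * (R ^ 5)⁻¹ := by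
        apply mul_le_mul_of_nonneg_right _ (by positivity)
        exact mul_le_mul_of_nonneg_left h14 hC0
      refine le_trans this (le_of_eq ?_)
      field_simp
    have h0 : ‖p.coeff n‖ ≤ 0 := by
      have htend : Filter.Tendsto (fun R : ℝ => 16 * C / R) Filter.atTop (nhds 0) :=
        Filter.Tendsto.div_atTop tendsto_const_nhds Filter.tendsto_id
      refine ge_of_tendsto htend ?_
      filter_upwards [Filter.eventually_ge_atTop (1 : ℝ)] with R hR
      exact key R hR
    simpa using norm_le_zero_iff.mp h0
  refine ⟨∑ k ∈ Finset.range 5, Polynomial.C (p.coeff k) * Polynomial.X ^ k, ?_, ?_⟩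
  · refine le_trans (Polynomial.degree_sum_le _ _) ?_
    rw [Finset.sup_le_iff]
    intro k hk
    refine le_trans (Polynomial.degree_C_mul_X_pow_le _ _) ?_
    have : k ≤ 4 := Nat.lt_succ_iff.mp (Finset.mem_range.mp hk)
    exact_mod_cast this
  · intro z
    have hz : z ∈ Metric.eball (0 : ℂ) ⊤ := Metric.mem_eball.mpr (edist_lt_top _ _)
    have hs := hp.hasSum hz
    have hs2 : HasSum (fun k : ℕ => z ^ k • p.coeff k) (g z) := by
      simpa [FormalMultilinearSeries.apply_eq_pow_smul_coeff] using hs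
    have hfin : HasSum (fun k : ℕ => z ^ k • p.coeff k)
        (∑ k ∈ Finset.range 5, z ^ k • p.coeff k) := by
      apply hasSum_sum_of_ne_finset_zero
      intro k hk
      have : 5 ≤ k := le_of_not_gt (fun h => hk (Finset.mem_range.mpr h))
      simp [hcoeff k this]
    rw [hs2.unique hfin, Polynomial.eval_finset_sum]
    refine Finset.sum_congr rfl fun k _ => ?_
    rw [smul_eq_mul, Polynomial.eval_mul, Polynomial.eval_C, Polynomial.eval_pow,
      Polynomial.eval_X, mul_comm]


/-- A bounded `C¹` spin-weight-2 function on the sphere with `ð₂ f = 0` is of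
the form `q(z)/(1+|z|²)²` with `deg q ≤ 4`; hence the five harmonics
`₂Y_{2,m}` span the `ð`-kernel among regular spin-weight-2 functions. -/
theorem edth_two_kernel (f : ℂ → ℂ) (hf : ContDiff ℝ 1 f)
    (hbd : ∃ M : ℝ, ∀ z : ℂ, ‖f z‖ ≤ M)
    (hker : ∀ z : ℂ, edth 2 f z = 0) :
    ∃ q : Polynomial ℂ, q.degree ≤ 4 ∧
      ∀ z : ℂ, f z = q.eval z / (1 + (‖z‖) ^ 2 : ℂ) ^ 2 := by
  obtain ⟨M, hM⟩ := hbd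
  set g : ℂ → ℂ := fun w => (1 + (‖w‖) ^ 2 : ℂ) ^ 2 * f w with hg_def
  have hbase : ∀ w : ℂ, (1 + (‖w‖ : ℂ) ^ 2) = ((1 + (‖w‖) ^ 2 : ℝ) : ℂ) := by
    intro w; push_cast; ring
  have hbase_ne : ∀ w : ℂ, (1 + (‖w‖ : ℂ) ^ 2) ≠ 0 := by
    intro w
    rw [hbase w]
    exact_mod_cast ne_of_gt (by positivity : (0:ℝ) < 1 + (‖w‖) ^ 2)
  have hconj : ∀ w : ℂ, (1 + (‖w‖ : ℂ) ^ 2) = 1 + w * (starRingEnd ℂ) w := by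
    intro w
    rw [Complex.mul_conj, ← Complex.sq_norm, Complex.ofReal_pow]
  -- g is C¹ over ℝ
  have hgC : ContDiff ℝ 1 g := by
    have : g = fun w => (1 + w * (starRingEnd ℂ) w) ^ 2 * f w := by
      funext w; rw [hg_def]; simp only []; rw [hconj w]
    rw [this]
    exact (((contDiff_const.add (contDiff_id.mul Complex.conjCLE.contDiff)).pow 2)).mul hf
  -- the zpow version of g appearing in edth equals g
  have hgz : (fun w => (1 + (‖w‖ : ℂ) ^ 2) ^ (2:ℤ) * f w) = g := by
    funext w
    rw [hg_def]
    show (1 + (‖w‖ : ℂ) ^ 2) ^ (2:ℤ) * f w = (1 + (‖w‖ : ℂ) ^ 2) ^ 2 * f w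
    norm_cast
  -- wirtDBar g = 0
  have hbar : ∀ z : ℂ, fderiv ℝ g z Complex.I = Complex.I * fderiv ℝ g z 1 := by
    intro z
    have h := hker z
    rw [edth, hgz] at h
    have hs2 : ((Real.sqrt 2 : ℝ) : ℂ)⁻¹ ≠ 0 :=
      inv_ne_zero (Complex.ofReal_ne_zero.mpr (Real.sqrt_ne_zero'.mpr (by norm_num)))
    have hzp : (1 + (‖z‖ : ℂ) ^ 2) ^ ((1:ℤ) - 2) ≠ 0 :=
      zpow_ne_zero _ (hbase_ne z)
    have h0 : wirtDBar g z = 0 := by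
      rcases mul_eq_zero.mp h with h' | h'
      · rcases mul_eq_zero.mp h' with h'' | h''
        · exact absurd h'' hs2
        · exact absurd h'' hzp
      · exact h'
    rw [wirtDBar] at h0
    linear_combination (-2*Complex.I) * h0 + (fderiv ℝ g z Complex.I) * Complex.I_sq
  have hgdiff : Differentiable ℂ g := fun z =>
    cr_diffAt ((hgC.differentiable one_ne_zero) z) (hbar z)
  -- growth bound
  have hgrow : ∀ z : ℂ, ‖g z‖ ≤ M * (1 + ‖z‖) ^ 4 := by
    intro z
    have hM0 : (0:ℝ) ≤ M := le_trans (norm_nonneg _) (hM 0)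
    rw [hg_def]
    simp only []
    rw [norm_mul, norm_pow, hbase z]
    have h1 : ‖((1 + (‖z‖) ^ 2 : ℝ) : ℂ)‖ = 1 + (‖z‖) ^ 2 := by
      rw [Complex.norm_real, Real.norm_eq_abs, abs_of_pos (by positivity)]
    rw [h1]
    have h2 : ‖f z‖ ≤ M := by exact hM z
    have h3 : (1 + (‖z‖) ^ 2) ^ 2 ≤ (1 + ‖z‖) ^ 4 := by
      rw [show (4:ℕ) = 2 * 2 from rfl, pow_mul]
      apply pow_le_pow_left₀ (by positivity)
      nlinarith [norm_nonneg z]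
    calc (1 + (‖z‖) ^ 2) ^ 2 * ‖f z‖ ≤ (1 + ‖z‖) ^ 4 * M := by
          apply mul_le_mul h3 h2 (norm_nonneg _) (by positivity)
      _ = M * (1 + ‖z‖) ^ 4 := by ring
  obtain ⟨q, hq_deg, hq_eval⟩ := entire_quartic_growth g hgdiff M hgrow
  refine ⟨q, hq_deg, fun z => ?_⟩
  rw [eq_div_iff (pow_ne_zero 2 (hbase_ne z)), ← hq_eval z, hg_def]
  ring
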